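/- Let E be an exact category with enough projectives. Then the monomorphism category MMor_k(E) has enough projectives: for every object (X•, α•) in MMor_k(E) there is an admissible epimorphism from a projective object of MMor_k(E) onto X•. -/

import Mathlib

open CategoryTheory Limits

universe v u

/-- An exact structure (in the sense of Quillen/Bühler) on an additive category `E`:
a class of kernel–cokernel pairs (`ses f g` meaning `X ↣ Y ↠ Z` is an admissible short
exact sequence), closed under isomorphism, such that admissible monomorphisms (resp.
epimorphisms) contain identities, are closed under composition, and are stable under
pushout (resp. pullback). -/
structure ExactStructure (E : Type u) [Category.{v} E] [Preadditive E] [HasZeroObject E] where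
  ses : ∀ ⦃X Y Z : E⦄, (X ⟶ Y) → (Y ⟶ Z) → Prop
  comp_zero : ∀ {X Y Z : E} {f : X ⟶ Y} {g : Y ⟶ Z}, ses f g → f ≫ g = 0
  isKernel : ∀ {X Y Z : E} {f : X ⟶ Y} {g : Y ⟶ Z} (h : ses f g),
      Nonempty (IsLimit (KernelFork.ofι f (comp_zero h)))
  isCokernel : ∀ {X Y Z : E} {f : X ⟶ Y} {g : Y ⟶ Z} (h : ses f g),
      Nonempty (IsColimit (CokernelCofork.ofπ g (comp_zero h)))
  iso_closed : ∀ {X Y Z X' Y' Z' : E} {f : X ⟶ Y} {g : Y ⟶ Z}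
      (eX : X ≅ X') (eY : Y ≅ Y') (eZ : Z ≅ Z') {f' : X' ⟶ Y'} {g' : Y' ⟶ Z'},
      f ≫ eY.hom = eX.hom ≫ f' → g ≫ eZ.hom = eY.hom ≫ g' → ses f g → ses f' g'
  id_mono : ∀ X : E, ∃ (Z : E) (g : X ⟶ Z), ses (𝟙 X) g
  id_epi : ∀ X : E, ∃ (W : E) (f : W ⟶ X), ses f (𝟙 X)
  mono_comp : ∀ {X Y Z : E} {f : X ⟶ Y} {g : Y ⟶ Z},
      (∃ (W : E) (h : Y ⟶ W), ses f h) → (∃ (W : E) (h : Z ⟶ W), ses g h) →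
      ∃ (W : E) (h : Z ⟶ W), ses (f ≫ g) h
  epi_comp : ∀ {X Y Z : E} {f : X ⟶ Y} {g : Y ⟶ Z},
      (∃ (W : E) (h : W ⟶ X), ses h f) → (∃ (W : E) (h : W ⟶ Y), ses h g) →
      ∃ (W : E) (h : W ⟶ X), ses h (f ≫ g)
  mono_pushout : ∀ {X Y Z : E} (f : X ⟶ Y) (t : X ⟶ Z),
      (∃ (W : E) (g : Y ⟶ W), ses f g) →
      ∃ (P : E) (f' : Z ⟶ P) (t' : Y ⟶ P), IsPushout t f f' t' ∧
        ∃ (W : E) (g : P ⟶ W), ses f' g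
  epi_pullback : ∀ {X Y Z : E} (g : Y ⟶ X) (t : Z ⟶ X),
      (∃ (W : E) (f : W ⟶ Y), ses f g) →
      ∃ (P : E) (g' : P ⟶ Z) (t' : P ⟶ Y), IsPullback g' t' t g ∧
        ∃ (W : E) (f : W ⟶ P), ses f g'

namespace ExactStructure

variable {E : Type u} [Category.{v} E] [Preadditive E] [HasZeroObject E]
variable (S : ExactStructure E)

/-- `f` is an admissible monomorphism. -/
def AdmMono {X Y : E} (f : X ⟶ Y) : Prop := ∃ (Z : E) (g : Y ⟶ Z), S.ses f g

/-- `g` is an admissible epimorphism. -/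
def AdmEpi {Y Z : E} (g : Y ⟶ Z) : Prop := ∃ (X : E) (f : X ⟶ Y), S.ses f g

/-- An object of `E` is injective (w.r.t. the exact structure). -/
def EInjective (I : E) : Prop :=
  ∀ ⦃X Y : E⦄ (f : X ⟶ Y), S.AdmMono f → ∀ u : X ⟶ I, ∃ v : Y ⟶ I, f ≫ v = u

/-- An object of `E` is projective (w.r.t. the exact structure). -/
def EProjective (P : E) : Prop :=
  ∀ ⦃Y Z : E⦄ (g : Y ⟶ Z), S.AdmEpi g → ∀ u : P ⟶ Z, ∃ v : P ⟶ Y, v ≫ g = u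

/-- An object of the monomorphism category `MMor_k(E)`: a diagram of `k` composable
admissible monomorphisms in `E`. -/
structure MMorObj (k : ℕ) where
  obj : Fin (k + 1) → E
  map : ∀ i : Fin k, obj i.castSucc ⟶ obj i.succ
  adm : ∀ i, S.AdmMono (map i)

/-- A morphism in the monomorphism category `MMor_k(E)`. -/
structure MMorHom {k : ℕ} (X Y : S.MMorObj k) where
  app : ∀ i, X.obj i ⟶ Y.obj i
  comm : ∀ i : Fin k, X.map i ≫ app i.succ = app i.castSucc ≫ Y.map i

variable {S}

/-- A componentwise admissible short exact sequence in `MMor_k(E)`. -/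
def MMorSes {k : ℕ} {X Y Z : S.MMorObj k} (f : S.MMorHom X Y) (g : S.MMorHom Y Z) : Prop :=
  ∀ i, S.ses (f.app i) (g.app i)

/-- Admissible monomorphisms of `MMor_k(E)`. -/
def MMorAdmMono {k : ℕ} {X Y : S.MMorObj k} (f : S.MMorHom X Y) : Prop :=
  ∃ (Z : S.MMorObj k) (g : S.MMorHom Y Z), MMorSes f g

/-- Admissible epimorphisms of `MMor_k(E)`. -/
def MMorAdmEpi {k : ℕ} {Y Z : S.MMorObj k} (g : S.MMorHom Y Z) : Prop :=
  ∃ (X : S.MMorObj k) (f : S.MMorHom X Y), MMorSes f g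

/-- Injective objects of the exact category `MMor_k(E)`. -/
def MMorInjective {k : ℕ} (I : S.MMorObj k) : Prop :=
  ∀ ⦃X Y : S.MMorObj k⦄ (f : S.MMorHom X Y), MMorAdmMono f →
    ∀ u : S.MMorHom X I, ∃ v : S.MMorHom Y I, ∀ i, f.app i ≫ v.app i = u.app i

/-- Projective objects of the exact category `MMor_k(E)`. -/
def MMorProjective {k : ℕ} (P : S.MMorObj k) : Prop :=
  ∀ ⦃Y Z : S.MMorObj k⦄ (g : S.MMorHom Y Z), MMorAdmEpi g →
    ∀ u : S.MMorHom P Z, ∃ v : S.MMorHom P Y, ∀ i, v.app i ≫ g.app i = u.app i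

end ExactStructure

/-! ### Auxiliary development -/

namespace ExactStructure

open ZeroObject

variable {E : Type u} [Category.{v} E] [Preadditive E] [HasZeroObject E]
variable {S : ExactStructure E}

/-- Transfer a short exact sequence along another cokernel of the same admissible mono. -/
theorem ses_of_isColimit {X Y Z Z' : E} {f : X ⟶ Y} {g : Y ⟶ Z} (h : S.ses f g)
    {g' : Y ⟶ Z'} (w : f ≫ g' = 0) (hc : IsColimit (CokernelCofork.ofπ g' w)) :
    S.ses f g' := by
  obtain ⟨c⟩ := S.isCokernel h
  have he : g ≫ (c.coconePointUniqueUpToIso hc).hom = g' := by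
    simpa using c.comp_coconePointUniqueUpToIso_hom hc WalkingParallelPair.one
  exact S.iso_closed (Iso.refl X) (Iso.refl Y) (c.coconePointUniqueUpToIso hc)
    (by simp) (by simpa using he) h

/-- Transfer a short exact sequence along another kernel of the same admissible epi. -/
theorem ses_of_isLimit {X X' Y Z : E} {f : X ⟶ Y} {g : Y ⟶ Z} (h : S.ses f g)
    {f' : X' ⟶ Y} (w : f' ≫ g = 0) (hc : IsLimit (KernelFork.ofι f' w)) :
    S.ses f' g := by
  obtain ⟨c⟩ := S.isKernel h
  have he : (c.conePointUniqueUpToIso hc).hom ≫ f' = f := by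
    simpa using c.conePointUniqueUpToIso_hom_comp hc WalkingParallelPair.zero
  exact S.iso_closed (c.conePointUniqueUpToIso hc) (Iso.refl Y) (Iso.refl Z)
    (by simpa using he.symm) (by simp) h

theorem ses_zero_id (X : E) : S.ses (0 : (0 : E) ⟶ X) (𝟙 X) := by
  obtain ⟨W, f, h⟩ := S.id_epi X
  have hlim : IsLimit (KernelFork.ofι (f := 𝟙 X) (0 : (0 : E) ⟶ X) (by simp)) :=
    KernelFork.IsLimit.ofι _ _ (fun {W'} k hk => 0)
      (fun {W'} k hk => by
        rw [zero_comp]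
        simpa using hk.symm)
      (fun {W'} k hk m hm => (isZero_zero E).eq_of_tgt _ _)
  exact ses_of_isLimit h (by simp) hlim

theorem admMono_zero (X : E) : S.AdmMono (0 : (0 : E) ⟶ X) :=
  ⟨X, 𝟙 X, ses_zero_id X⟩

theorem AdmMono.comp_iso {X Y Y' : E} {f : X ⟶ Y} (h : S.AdmMono f) (e : Y ≅ Y') :
    S.AdmMono (f ≫ e.hom) := by
  obtain ⟨Z, g, hg⟩ := h
  exact ⟨Z, e.inv ≫ g, S.iso_closed (Iso.refl X) e (Iso.refl Z) (by simp) (by simp) hg⟩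

/-- A binary-coproduct gadget, with the first injection an admissible mono. -/
structure Cop (S : ExactStructure E) (A B : E) where
  C : E
  i1 : A ⟶ C
  i2 : B ⟶ C
  adm1 : S.AdmMono i1
  desc : ∀ {T : E}, (A ⟶ T) → (B ⟶ T) → (C ⟶ T)
  i1_desc : ∀ {T : E} (u : A ⟶ T) (v : B ⟶ T), i1 ≫ desc u v = u
  i2_desc : ∀ {T : E} (u : A ⟶ T) (v : B ⟶ T), i2 ≫ desc u v = v
  hom_ext : ∀ {T : E} {l l' : C ⟶ T}, i1 ≫ l = i1 ≫ l' → i2 ≫ l = i2 ≫ l' → l = l'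

theorem Cop.i1_desc_assoc {A B : E} (c : Cop S A B) {T T' : E} (u : A ⟶ T) (v : B ⟶ T)
    (t : T ⟶ T') : c.i1 ≫ c.desc u v ≫ t = u ≫ t := by
  rw [← Category.assoc, c.i1_desc]

theorem Cop.i2_desc_assoc {A B : E} (c : Cop S A B) {T T' : E} (u : A ⟶ T) (v : B ⟶ T)
    (t : T ⟶ T') : c.i2 ≫ c.desc u v ≫ t = v ≫ t := by
  rw [← Category.assoc, c.i2_desc]

theorem cop_nonempty (S : ExactStructure E) (A B : E) : Nonempty (Cop S A B) := by
  obtain ⟨P, f', t', hpo, hadm⟩ :=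
    S.mono_pushout (0 : (0 : E) ⟶ B) (0 : (0 : E) ⟶ A) (admMono_zero B)
  exact ⟨⟨P, f', t', hadm,
    fun {T} u v => hpo.desc u v ((isZero_zero E).eq_of_src _ _),
    fun {T} u v => hpo.inl_desc _ _ _,
    fun {T} u v => hpo.inr_desc _ _ _,
    fun {T} l l' h1 h2 => hpo.hom_ext h1 h2⟩⟩

theorem cop_isPushout_left {A A' B : E} (c : Cop S A B) (c' : Cop S A' B) (f : A ⟶ A') :
    IsPushout c.i1 f (c.desc (f ≫ c'.i1) c'.i2) c'.i1 := by
  apply IsPushout.of_isColimit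
    (c := PushoutCocone.mk (c.desc (f ≫ c'.i1) c'.i2) c'.i1 (by rw [c.i1_desc]))
  refine PushoutCocone.IsColimit.mk _ (fun s => c'.desc s.inr (c.i2 ≫ s.inl))
    (fun s => c.hom_ext ?_ ?_) (fun s => c'.i1_desc _ _) (fun s m h1 h2 => c'.hom_ext ?_ ?_)
  · rw [c.i1_desc_assoc, Category.assoc, c'.i1_desc]
    exact s.condition.symm
  · rw [c.i2_desc_assoc, c'.i2_desc]
  · rw [h2, c'.i1_desc]
  · have h3 : c.i2 ≫ c.desc (f ≫ c'.i1) c'.i2 = c'.i2 := c.i2_desc _ _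
    rw [c'.i2_desc, ← h3, Category.assoc, h1]

theorem cop_isPushout_right {A B B' : E} (c : Cop S A B) (c' : Cop S A B') (g : B ⟶ B') :
    IsPushout c.i2 g (c.desc c'.i1 (g ≫ c'.i2)) c'.i2 := by
  apply IsPushout.of_isColimit
    (c := PushoutCocone.mk (c.desc c'.i1 (g ≫ c'.i2)) c'.i2 (by rw [c.i2_desc]))
  refine PushoutCocone.IsColimit.mk _ (fun s => c'.desc (c.i1 ≫ s.inl) s.inr)
    (fun s => c.hom_ext ?_ ?_) (fun s => c'.i2_desc _ _) (fun s m h1 h2 => c'.hom_ext ?_ ?_)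
  · rw [c.i1_desc_assoc, c'.i1_desc]
  · rw [c.i2_desc_assoc, Category.assoc, c'.i2_desc]
    exact s.condition.symm
  · have h3 : c.i1 ≫ c.desc c'.i1 (g ≫ c'.i2) = c'.i1 := c.i1_desc _ _
    rw [c'.i1_desc, ← h3, Category.assoc, h1]
  · rw [h2, c'.i2_desc]

theorem cop_admMono_left {A A' B : E} (c : Cop S A B) (c' : Cop S A' B) {f : A ⟶ A'}
    (hf : S.AdmMono f) : S.AdmMono (c.desc (f ≫ c'.i1) c'.i2) := by
  obtain ⟨P, f', t', hpo, hadm⟩ := S.mono_pushout f c.i1 hf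
  have h2 := cop_isPushout_left c c' f
  have h3 := AdmMono.comp_iso (show S.AdmMono f' from hadm) (hpo.isoIsPushout _ _ h2)
  rwa [IsPushout.inl_isoIsPushout_hom] at h3

theorem cop_admMono_right {A B B' : E} (c : Cop S A B) (c' : Cop S A B') {g : B ⟶ B'}
    (hg : S.AdmMono g) : S.AdmMono (c.desc c'.i1 (g ≫ c'.i2)) := by
  obtain ⟨P, f', t', hpo, hadm⟩ := S.mono_pushout g c.i2 hg
  have h2 := cop_isPushout_right c c' g
  have h3 := AdmMono.comp_iso (show S.AdmMono f' from hadm) (hpo.isoIsPushout _ _ h2)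
  rwa [IsPushout.inl_isoIsPushout_hom] at h3

theorem cop_projective {A B : E} (c : Cop S A B) (hA : S.EProjective A) (hB : S.EProjective B) :
    S.EProjective c.C := by
  intro Y Z g hg u
  obtain ⟨v1, hv1⟩ := hA g hg (c.i1 ≫ u)
  obtain ⟨v2, hv2⟩ := hB g hg (c.i2 ≫ u)
  refine ⟨c.desc v1 v2, c.hom_ext ?_ ?_⟩
  · rw [c.i1_desc_assoc, hv1]
  · rw [c.i2_desc_assoc, hv2]

/-- The relative lifting property of the split monos in the construction. -/
def RelLift (S : ExactStructure E) {A B : E} (σ : A ⟶ B) : Prop :=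
  ∀ ⦃Y Z : E⦄ (g : Y ⟶ Z), S.AdmEpi g → ∀ (u : B ⟶ Z) (t : A ⟶ Y),
    t ≫ g = σ ≫ u → ∃ v : B ⟶ Y, σ ≫ v = t ∧ v ≫ g = u

variable (S) in
/-- The data constructed at level `i`. -/
structure LevelData {k : ℕ} (X : S.MMorObj k) (i : Fin (k + 1)) where
  Q : E
  q : Q ⟶ X.obj i
  K : E
  kk : K ⟶ Q
  hses : S.ses kk q
  hproj : S.EProjective Q

variable (S) in
/-- The data of one step of the construction. -/
structure StepData {k : ℕ} (X : S.MMorObj k) (i : Fin k) (prev : LevelData S X i.castSucc) where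
  next : LevelData S X i.succ
  σ : prev.Q ⟶ next.Q
  κ : prev.K ⟶ next.K
  hσ : S.AdmMono σ
  hκ : S.AdmMono κ
  hlift : RelLift S σ
  hcomm : σ ≫ next.q = prev.q ≫ X.map i
  hkcomm : κ ≫ next.kk = prev.kk ≫ σ

theorem StepData.transfer {k : ℕ} {X : S.MMorObj k} {i : Fin k} {prev : LevelData S X i.castSucc}
    (s : StepData S X i prev) {L : LevelData S X i.succ} (h : s.next = L) :
    ∃ (σ : prev.Q ⟶ L.Q) (κ : prev.K ⟶ L.K), S.AdmMono σ ∧ S.AdmMono κ ∧ RelLift S σ ∧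
      σ ≫ L.q = prev.q ≫ X.map i ∧ κ ≫ L.kk = prev.kk ≫ σ := by
  subst h
  exact ⟨s.σ, s.κ, s.hσ, s.hκ, s.hlift, s.hcomm, s.hkcomm⟩

theorem base_exists {k : ℕ} (X : S.MMorObj k)
    (hE : ∀ A : E, ∃ (P : E) (p : P ⟶ A), S.EProjective P ∧ S.AdmEpi p) :
    Nonempty (LevelData S X 0) := by
  obtain ⟨P, p, hproj, hepi⟩ := hE (X.obj 0)
  obtain ⟨K, kk, hses⟩ := hepi
  exact ⟨⟨P, p, K, kk, hses, hproj⟩⟩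

theorem step_exists {k : ℕ} (X : S.MMorObj k)
    (hE : ∀ A : E, ∃ (P : E) (p : P ⟶ A), S.EProjective P ∧ S.AdmEpi p)
    (i : Fin k) (prev : LevelData S X i.castSucc) :
    Nonempty (StepData S X i prev) := by
  obtain ⟨P, p, hPproj, hPepi⟩ := hE (X.obj i.succ)
  obtain ⟨K', k', hk'⟩ := hPepi
  obtain ⟨w, hw⟩ := prev.hproj p ⟨K', k', hk'⟩ (prev.q ≫ X.map i)
  obtain ⟨c⟩ := cop_nonempty S prev.Q P
  obtain ⟨c2⟩ := cop_nonempty S prev.Q K'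
  obtain ⟨c3⟩ := cop_nonempty S prev.K K'
  have hk'p : k' ≫ p = 0 := S.comp_zero hk'
  -- the shearing automorphism of `c.C`
  have hphi1 : c.desc (c.i1 - w ≫ c.i2) c.i2 ≫ c.desc (c.i1 + w ≫ c.i2) c.i2 = 𝟙 c.C := by
    apply c.hom_ext
    · rw [c.i1_desc_assoc, Category.comp_id, Preadditive.sub_comp, c.i1_desc,
        Category.assoc, c.i2_desc, add_sub_cancel_right]
    · rw [c.i2_desc_assoc, c.i2_desc, Category.comp_id]
  have hphi2 : c.desc (c.i1 + w ≫ c.i2) c.i2 ≫ c.desc (c.i1 - w ≫ c.i2) c.i2 = 𝟙 c.C := by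
    apply c.hom_ext
    · rw [c.i1_desc_assoc, Category.comp_id, Preadditive.add_comp, c.i1_desc,
        Category.assoc, c.i2_desc, sub_add_cancel]
    · rw [c.i2_desc_assoc, c.i2_desc, Category.comp_id]
  -- the kernel inclusion candidate
  have hc1adm : S.AdmMono (c2.desc c.i1 (k' ≫ c.i2)) :=
    cop_admMono_right c2 c ⟨X.obj i.succ, p, hk'⟩
  have hpp0 : c2.desc c.i1 (k' ≫ c.i2) ≫ c.desc 0 (𝟙 P) ≫ p = 0 := by
    apply c2.hom_ext
    · rw [c2.i1_desc_assoc, c.i1_desc_assoc, zero_comp, Limits.comp_zero]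
    · rw [c2.i2_desc_assoc, Category.assoc, c.i2_desc_assoc, Category.id_comp, hk'p,
        Limits.comp_zero]
  obtain ⟨ck⟩ := S.isCokernel hk'
  have hpepi : ∀ {T : E} (a b : X.obj i.succ ⟶ T), p ≫ a = p ≫ b → a = b := by
    intro T a b hab
    exact Cofork.IsColimit.hom_ext ck (by simpa using hab)
  have hkt : ∀ {T : E} (t : c.C ⟶ T), c2.desc c.i1 (k' ≫ c.i2) ≫ t = 0 →
      k' ≫ c.i2 ≫ t = 0 := by
    intro T t ht
    have h2 := c2.i2_desc_assoc c.i1 (k' ≫ c.i2) t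
    rw [ht, Limits.comp_zero] at h2
    rw [← Category.assoc]
    exact h2.symm
  have colim : IsColimit (CokernelCofork.ofπ (c.desc 0 (𝟙 P) ≫ p) hpp0) := by
    refine CokernelCofork.IsColimit.ofπ _ _
      (fun {T} t ht => (CokernelCofork.IsColimit.desc' ck (c.i2 ≫ t) (hkt t ht)).1)
      (fun {T} t ht => ?_) (fun {T} t ht m hm => ?_)
    · have hdesc : p ≫ (CokernelCofork.IsColimit.desc' ck (c.i2 ≫ t) (hkt t ht)).1
          = c.i2 ≫ t := by
        simpa using (CokernelCofork.IsColimit.desc' ck (c.i2 ≫ t) (hkt t ht)).2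
      apply c.hom_ext
      · have h1 := c2.i1_desc_assoc c.i1 (k' ≫ c.i2) t
        rw [ht, Limits.comp_zero] at h1
        rw [Category.assoc, c.i1_desc_assoc, zero_comp, ← h1]
      · rw [Category.assoc, c.i2_desc_assoc, Category.id_comp, hdesc]
    · have hdesc : p ≫ (CokernelCofork.IsColimit.desc' ck (c.i2 ≫ t) (hkt t ht)).1
          = c.i2 ≫ t := by
        simpa using (CokernelCofork.IsColimit.desc' ck (c.i2 ≫ t) (hkt t ht)).2
      apply hpepi
      rw [hdesc]
      calc p ≫ m = (c.i2 ≫ c.desc 0 (𝟙 P) ≫ p) ≫ m := by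
              rw [c.i2_desc_assoc, Category.id_comp]
        _ = c.i2 ≫ (c.desc 0 (𝟙 P) ≫ p) ≫ m := by rw [Category.assoc]
        _ = c.i2 ≫ t := by rw [hm]
  have hses_c1 : S.ses (c2.desc c.i1 (k' ≫ c.i2)) (c.desc 0 (𝟙 P) ≫ p) := by
    obtain ⟨W0, g0, hg0⟩ := hc1adm
    exact ses_of_isColimit hg0 hpp0 colim
  have hphir : c.desc (c.i1 - w ≫ c.i2) c.i2 ≫ c.desc w (𝟙 P) = c.desc 0 (𝟙 P) := by
    apply c.hom_ext
    · rw [c.i1_desc_assoc, Preadditive.sub_comp, c.i1_desc, Category.assoc, c.i2_desc,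
        Category.comp_id, sub_self, c.i1_desc]
    · rw [c.i2_desc_assoc, c.i2_desc, c.i2_desc]
  have hses_next : S.ses (c2.desc c.i1 (k' ≫ c.i2) ≫ c.desc (c.i1 - w ≫ c.i2) c.i2)
      (c.desc w (𝟙 P) ≫ p) := by
    refine S.iso_closed (Iso.refl c2.C)
      ⟨c.desc (c.i1 - w ≫ c.i2) c.i2, c.desc (c.i1 + w ≫ c.i2) c.i2, hphi1, hphi2⟩
      (Iso.refl (X.obj i.succ)) ?_ ?_ hses_c1
    · dsimp only
      rw [Iso.refl_hom, Category.id_comp]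
    · dsimp only
      rw [Iso.refl_hom, Category.comp_id, ← Category.assoc, hphir]
  -- the kernel map κ
  obtain ⟨lim⟩ := S.isKernel hk'
  have h0 : (prev.kk ≫ w) ≫ p = 0 := by
    rw [Category.assoc, hw, ← Category.assoc, S.comp_zero prev.hses, zero_comp]
  obtain ⟨m, hm⟩ := KernelFork.IsLimit.lift' lim (prev.kk ≫ w) h0
  have hmk : m ≫ k' = prev.kk ≫ w := by simpa using hm
  have hth1 : c3.desc (c3.i1 + m ≫ c3.i2) c3.i2 ≫ c3.desc (c3.i1 - m ≫ c3.i2) c3.i2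
      = 𝟙 c3.C := by
    apply c3.hom_ext
    · rw [c3.i1_desc_assoc, Category.comp_id, Preadditive.add_comp, c3.i1_desc,
        Category.assoc, c3.i2_desc, sub_add_cancel]
    · rw [c3.i2_desc_assoc, c3.i2_desc, Category.comp_id]
  have hth2 : c3.desc (c3.i1 - m ≫ c3.i2) c3.i2 ≫ c3.desc (c3.i1 + m ≫ c3.i2) c3.i2
      = 𝟙 c3.C := by
    apply c3.hom_ext
    · rw [c3.i1_desc_assoc, Category.comp_id, Preadditive.sub_comp, c3.i1_desc,
        Category.assoc, c3.i2_desc, add_sub_cancel_right]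
    · rw [c3.i2_desc_assoc, c3.i2_desc, Category.comp_id]
  have hrho : S.AdmMono (c3.desc (prev.kk ≫ c2.i1) c2.i2) :=
    cop_admMono_left c3 c2 ⟨X.obj i.castSucc, prev.q, prev.hses⟩
  have hthsig : S.AdmMono (c3.i1 ≫ c3.desc (c3.i1 + m ≫ c3.i2) c3.i2) :=
    AdmMono.comp_iso c3.adm1
      ⟨c3.desc (c3.i1 + m ≫ c3.i2) c3.i2, c3.desc (c3.i1 - m ≫ c3.i2) c3.i2, hth1, hth2⟩
  have hcompk : (c3.i1 ≫ c3.desc (c3.i1 + m ≫ c3.i2) c3.i2) ≫ c3.desc (prev.kk ≫ c2.i1) c2.i2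
      = prev.kk ≫ c2.i1 + m ≫ c2.i2 := by
    rw [Category.assoc, c3.i1_desc_assoc, Preadditive.add_comp, c3.i1_desc,
      Category.assoc, c3.i2_desc]
  have hkadm : S.AdmMono (prev.kk ≫ c2.i1 + m ≫ c2.i2) := by
    have h4 := S.mono_comp hthsig hrho
    rwa [hcompk] at h4
  have hkcommp : (prev.kk ≫ c2.i1 + m ≫ c2.i2) ≫
      (c2.desc c.i1 (k' ≫ c.i2) ≫ c.desc (c.i1 - w ≫ c.i2) c.i2) = prev.kk ≫ c.i1 := by
    have e1 : (prev.kk ≫ c2.i1 + m ≫ c2.i2) ≫ c2.desc c.i1 (k' ≫ c.i2)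
        = prev.kk ≫ c.i1 + prev.kk ≫ w ≫ c.i2 := by
      rw [Preadditive.add_comp, Category.assoc, Category.assoc, c2.i1_desc, c2.i2_desc,
        ← Category.assoc, hmk, Category.assoc]
    have e2 : (prev.kk ≫ c.i1 + prev.kk ≫ w ≫ c.i2) ≫ c.desc (c.i1 - w ≫ c.i2) c.i2
        = prev.kk ≫ c.i1 := by
      rw [Preadditive.add_comp, Category.assoc, c.i1_desc, Category.assoc, Category.assoc,
        c.i2_desc, Preadditive.comp_sub, ← Category.assoc prev.kk w, Category.assoc,
        sub_add_cancel]
    rw [← Category.assoc, e1, e2]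
  have hliftp : RelLift S c.i1 := by
    intro Y0 Z0 g hg u t ht
    obtain ⟨v2, hv2⟩ := hPproj g hg (c.i2 ≫ u)
    refine ⟨c.desc t v2, c.i1_desc _ _, c.hom_ext ?_ ?_⟩
    · rw [c.i1_desc_assoc, ht]
    · rw [c.i2_desc_assoc, hv2]
  have hcommp : c.i1 ≫ c.desc w (𝟙 P) ≫ p = prev.q ≫ X.map i := by
    rw [c.i1_desc_assoc, hw]
  exact ⟨⟨⟨c.C, c.desc w (𝟙 P) ≫ p, c2.C,
      c2.desc c.i1 (k' ≫ c.i2) ≫ c.desc (c.i1 - w ≫ c.i2) c.i2, hses_next,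
      cop_projective c prev.hproj hPproj⟩,
    c.i1, prev.kk ≫ c2.i1 + m ≫ c2.i2, c.adm1, hkadm, hliftp, hcommp, hkcommp⟩⟩

end ExactStructure

/-- If the exact category `E` has enough projectives, then so does the
monomorphism category `MMor_k(E)`: every object admits an admissible epimorphism from a
projective object of `MMor_k(E)`. -/
theorem mmor_enough_projectives
    {E : Type u} [Category.{v} E] [Preadditive E] [HasZeroObject E]
    (S : ExactStructure E) (k : ℕ)
    (hE : ∀ X : E, ∃ (P : E) (p : P ⟶ X), S.EProjective P ∧ S.AdmEpi p) :
    ∀ X : S.MMorObj k, ∃ (P : S.MMorObj k) (p : S.MMorHom P X),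
      ExactStructure.MMorProjective P ∧ ExactStructure.MMorAdmEpi p := by
  classical
  intro X
  obtain ⟨b⟩ := ExactStructure.base_exists X hE
  let stp : ∀ (i : Fin k) (prev : ExactStructure.LevelData S X i.castSucc),
      ExactStructure.StepData S X i prev :=
    fun i prev => Classical.choice (ExactStructure.step_exists X hE i prev)
  let D : ∀ i : Fin (k + 1), ExactStructure.LevelData S X i :=
    Fin.induction (motive := fun i => ExactStructure.LevelData S X i) b
      (fun i prev => (stp i prev).next)
  have hD : ∀ i : Fin k, (stp i (D i.castSucc)).next = D i.succ := fun i => rfl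
  have T := fun i : Fin k => (stp i (D i.castSucc)).transfer (hD i)
  choose σ κ h1 h2 h3 h4 h5 using T
  refine ⟨⟨fun i => (D i).Q, σ, h1⟩, ⟨fun i => (D i).q, h4⟩, ?_,
    ⟨fun i => (D i).K, κ, h2⟩, ⟨fun i => (D i).kk, h5⟩, fun i => (D i).hses⟩
  intro Y Z g hg u
  obtain ⟨W, w0, hw0⟩ := hg
  have hge : ∀ j, S.AdmEpi (g.app j) := fun j => ⟨_, _, hw0 j⟩
  have hcond : ∀ (j : Fin k) (prev : Σ' v : (D j.castSucc).Q ⟶ Y.obj j.castSucc,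
      v ≫ g.app j.castSucc = u.app j.castSucc),
      (prev.1 ≫ Y.map j) ≫ g.app j.succ = σ j ≫ u.app j.succ := by
    intro j prev
    rw [Category.assoc, g.comm j, ← Category.assoc, prev.2]
    exact (u.comm j).symm
  let stepV : ∀ (j : Fin k), (Σ' v : (D j.castSucc).Q ⟶ Y.obj j.castSucc,
        v ≫ g.app j.castSucc = u.app j.castSucc) →
      (Σ' v : (D j.succ).Q ⟶ Y.obj j.succ, v ≫ g.app j.succ = u.app j.succ) :=
    fun j prev =>
      ⟨(h3 j (g.app j.succ) (hge j.succ) (u.app j.succ) (prev.1 ≫ Y.map j)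
          (hcond j prev)).choose,
        (h3 j (g.app j.succ) (hge j.succ) (u.app j.succ) (prev.1 ≫ Y.map j)
          (hcond j prev)).choose_spec.2⟩
  let V : ∀ j : Fin (k + 1), Σ' v : (D j).Q ⟶ Y.obj j, v ≫ g.app j = u.app j :=
    Fin.induction (motive := fun j => Σ' v : (D j).Q ⟶ Y.obj j, v ≫ g.app j = u.app j)
      ⟨((D 0).hproj (g.app 0) (hge 0) (u.app 0)).choose,
        ((D 0).hproj (g.app 0) (hge 0) (u.app 0)).choose_spec⟩ stepV
  have hstep : ∀ (j : Fin k) prev, σ j ≫ (stepV j prev).1 = prev.1 ≫ Y.map j :=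
    fun j prev => (h3 j (g.app j.succ) (hge j.succ) (u.app j.succ) (prev.1 ≫ Y.map j)
      (hcond j prev)).choose_spec.1
  refine ⟨⟨fun j => (V j).1, fun j => ?_⟩, fun j => (V j).2⟩
  show σ j ≫ (V j.succ).1 = (V j.castSucc).1 ≫ Y.map j
  have e : V j.succ = stepV j (V j.castSucc) := rfl
  rw [e]
  exact hstep j _
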